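/- Let S ⊆ [m] × [n] with chordal bipartite graph G_S. Then the toric vanishing ideal I(M_S) ⊆ ℂ[p_{ij} : (i,j) ∈ S] of the quasi-independence model is generated by the binomials p_{ij} p_{kℓ} − p_{iℓ} p_{kj} over all quadruples with (i,j),(k,ℓ),(i,ℓ),(k,j) ∈ S. -/

import Mathlib

open Finset

open scoped Classical

/-- The bipartite graph associated to `S ⊆ [m] × [n]`. -/
def qiGraph (m n : ℕ) (S : Finset (Fin m × Fin n)) : SimpleGraph (Fin m ⊕ Fin n) :=
  SimpleGraph.fromRel (fun a b =>
    ∃ p : Fin m × Fin n, p ∈ S ∧ a = Sum.inl p.1 ∧ b = Sum.inr p.2)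

/-- A chord of a closed walk: an edge of `G` between vertices of the walk that is not
an edge of the walk. -/
def IsChord {V : Type*} (G : SimpleGraph V) {v : V} (c : G.Walk v v) (e : Sym2 V) : Prop :=
  e ∈ G.edgeSet ∧ e ∉ c.edges ∧ ∀ x ∈ e, x ∈ c.support

/-- Every cycle of length at least 6 has at least one chord. -/
def ChordalBipartite {V : Type*} (G : SimpleGraph V) : Prop :=
  ∀ (v : V) (c : G.Walk v v), c.IsCycle → 6 ≤ c.length → ∃ e : Sym2 V, IsChord G c e

/-- Every cycle of length at least 6 has at least two chords. -/
def DoublyChordalBipartite {V : Type*} (G : SimpleGraph V) : Prop :=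
  ∀ (v : V) (c : G.Walk v v), c.IsCycle → 6 ≤ c.length →
    ∃ e₁ e₂ : Sym2 V, e₁ ≠ e₂ ∧ IsChord G c e₁ ∧ IsChord G c e₂

variable {m n : ℕ}

/-- A (nonempty) clique in `S`: a subset of `S` of the form `R × T`. -/
def IsGridClique (S C : Finset (Fin m × Fin n)) : Prop :=
  C.Nonempty ∧ C ⊆ S ∧ ∀ p ∈ C, ∀ q ∈ C, (p.1, q.2) ∈ C

/-- A maximal clique in `S`. -/
def IsMaxClique (S C : Finset (Fin m × Fin n)) : Prop :=
  IsGridClique S C ∧ ∀ C', IsGridClique S C' → C ⊆ C' → C = C'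

/-- `Max(S)`: the set of maximal cliques of `S`. -/
noncomputable def maxCliques (S : Finset (Fin m × Fin n)) : Finset (Finset (Fin m × Fin n)) :=
  S.powerset.filter (IsMaxClique S)

/-- `Max(x)`: maximal cliques containing the index `x`. -/
noncomputable def maxCliquesAt (S : Finset (Fin m × Fin n)) (x : Fin m × Fin n) :
    Finset (Finset (Fin m × Fin n)) :=
  (maxCliques S).filter (fun D => x ∈ D)

/-- Pairwise intersections of distinct maximal cliques of `S`. -/
noncomputable def pairInts (S : Finset (Fin m × Fin n)) : Finset (Finset (Fin m × Fin n)) :=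
  ((maxCliques S ×ˢ maxCliques S).filter (fun P => P.1 ≠ P.2)).image (fun P => P.1 ∩ P.2)

/-- `Int(S)`: containment-maximal pairwise intersections of maximal cliques of `S`. -/
noncomputable def maxInts (S : Finset (Fin m × Fin n)) : Finset (Finset (Fin m × Fin n)) :=
  (pairInts S).filter (fun C => ∀ C' ∈ pairInts S, C ⊆ C' → C = C')

/-- Pairwise intersections of distinct elements of `Max(x)`. -/
noncomputable def pairIntsAt (S : Finset (Fin m × Fin n)) (x : Fin m × Fin n) :
    Finset (Finset (Fin m × Fin n)) :=
  ((maxCliquesAt S x ×ˢ maxCliquesAt S x).filter (fun P => P.1 ≠ P.2)).image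
    (fun P => P.1 ∩ P.2)

/-- `Int(x)`: containment-maximal pairwise intersections of elements of `Max(x)`. -/
noncomputable def maxIntsAt (S : Finset (Fin m × Fin n)) (x : Fin m × Fin n) :
    Finset (Finset (Fin m × Fin n)) :=
  (pairIntsAt S x).filter (fun C => ∀ C' ∈ pairIntsAt S x, C ⊆ C' → C = C')

/-- The rows of column `j` that are also nonzero rows of column `j₀`. -/
noncomputable def colRows (S : Finset (Fin m × Fin n)) (j₀ j : Fin n) : Finset (Fin m) :=
  Finset.univ.filter (fun i => (i, j) ∈ S ∧ (i, j₀) ∈ S)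

/-- The clique induced by the block (w.r.t. column `j₀`) of the column `j`. -/
noncomputable def inducedClique (S : Finset (Fin m × Fin n)) (j₀ j : Fin n) :
    Finset (Fin m × Fin n) :=
  Finset.univ.filter (fun p => p.1 ∈ colRows S j₀ j ∧ colRows S j₀ j ⊆ colRows S j₀ p.2)

/-- The row indices of a subset of `S`. -/
noncomputable def rowsOf (D : Finset (Fin m × Fin n)) : Finset (Fin m) := D.image Prod.fst

/-- An element of the poset `P(j₀)`: a maximal clique of `S` meeting column `j₀`. -/
def PNode (S : Finset (Fin m × Fin n)) (j₀ : Fin n) (D : Finset (Fin m × Fin n)) : Prop :=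
  IsMaxClique S D ∧ ∃ i, (i, j₀) ∈ D

/-- `PCovers S j₀ Dβ Dα` means `Dα ⋖ Dβ` in the poset `P(j₀)` (ordered by
containment of row sets). -/
def PCovers (S : Finset (Fin m × Fin n)) (j₀ : Fin n) (Dβ Dα : Finset (Fin m × Fin n)) : Prop :=
  PNode S j₀ Dα ∧ PNode S j₀ Dβ ∧ rowsOf Dα ⊂ rowsOf Dβ ∧
    ¬ ∃ Dγ, PNode S j₀ Dγ ∧ rowsOf Dα ⊂ rowsOf Dγ ∧ rowsOf Dγ ⊂ rowsOf Dβ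

/-- `C⁺`: the sum of the entries of `u` indexed by `C`. -/
def cliqueSum (u : Fin m × Fin n → ℝ) (C : Finset (Fin m × Fin n)) : ℝ := ∑ x ∈ C, u x

/-- `u_{i+}`: the `i`-th row marginal of `u` over `S`. -/
noncomputable def rowMarg (S : Finset (Fin m × Fin n)) (u : Fin m × Fin n → ℝ) (i : Fin m) : ℝ :=
  ∑ x ∈ S.filter (fun x => x.1 = i), u x

/-- `u_{+j}`: the `j`-th column marginal of `u` over `S`. -/
noncomputable def colMarg (S : Finset (Fin m × Fin n)) (u : Fin m × Fin n → ℝ) (j : Fin n) : ℝ :=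
  ∑ x ∈ S.filter (fun x => x.2 = j), u x

/-- `u_{++}`: the total sum of `u` over `S`. -/
def totalSum (S : Finset (Fin m × Fin n)) (u : Fin m × Fin n → ℝ) : ℝ := ∑ x ∈ S, u x

namespace QIProof

variable {m n : ℕ} (S : Finset (Fin m × Fin n))

noncomputable def φ : MvPolynomial {x // x ∈ S} ℂ →ₐ[ℂ] MvPolynomial (Fin m ⊕ Fin n) ℂ :=
  MvPolynomial.aeval (fun x : {x // x ∈ S} =>
    MvPolynomial.X (Sum.inl x.1.1) * MvPolynomial.X (Sum.inr x.1.2))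

def Q : Set (MvPolynomial {x // x ∈ S} ℂ) :=
  {f | ∃ (i k : Fin m) (j l : Fin n) (h1 : (i, j) ∈ S) (h2 : (k, l) ∈ S)
        (h3 : (i, l) ∈ S) (h4 : (k, j) ∈ S),
        f = MvPolynomial.X ⟨(i, j), h1⟩ * MvPolynomial.X ⟨(k, l), h2⟩ -
            MvPolynomial.X ⟨(i, l), h3⟩ * MvPolynomial.X ⟨(k, j), h4⟩}

noncomputable def ν (d : {x // x ∈ S} →₀ ℕ) : (Fin m ⊕ Fin n) →₀ ℕ :=
  d.sum fun x k => k • (Finsupp.single (Sum.inl x.1.1) 1 + Finsupp.single (Sum.inr x.1.2) 1)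

lemma ν_zero : ν S 0 = 0 := by simp [ν]

lemma ν_add (d e : {x // x ∈ S} →₀ ℕ) : ν S (d + e) = ν S d + ν S e := by
  classical
  exact Finsupp.sum_add_index' (by intro x; simp) (by intro x k l; rw [add_smul])

lemma ν_single (x : {x // x ∈ S}) (k : ℕ) :
    ν S (Finsupp.single x k) =
      k • (Finsupp.single (Sum.inl x.1.1) 1 + Finsupp.single (Sum.inr x.1.2) 1) := by
  classical
  rw [ν, Finsupp.sum_single_index]; simp

lemma phi_monomial (d : {x // x ∈ S} →₀ ℕ) :
    φ S (MvPolynomial.monomial d 1) = MvPolynomial.monomial (ν S d) 1 := by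
  classical
  induction d using Finsupp.induction with
  | zero => simp [ν_zero]
  | single_add x k d hx hk ih =>
      have h1 : (MvPolynomial.monomial (Finsupp.single x k + d) (1:ℂ)) =
          MvPolynomial.monomial (Finsupp.single x k) 1 * MvPolynomial.monomial d 1 := by
        rw [MvPolynomial.monomial_mul, one_mul]
      rw [h1, map_mul, ih, ν_add, ν_single]
      have h2 : φ S (MvPolynomial.monomial (Finsupp.single x k) 1) =
          (MvPolynomial.X (Sum.inl x.1.1) * MvPolynomial.X (Sum.inr x.1.2)) ^ k := by
        have : (MvPolynomial.monomial (Finsupp.single x k) (1:ℂ)) = MvPolynomial.X x ^ k := by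
          rw [MvPolynomial.X_pow_eq_monomial]
        rw [this, map_pow]
        simp [φ]
      rw [h2]
      rw [MvPolynomial.X, MvPolynomial.X, MvPolynomial.monomial_mul, MvPolynomial.monomial_pow,
        MvPolynomial.monomial_mul]
      simp



lemma ν_apply_inl (d : {x // x ∈ S} →₀ ℕ) (i : Fin m) :
    ν S d (Sum.inl i) = ∑ x ∈ d.support.filter (fun x => x.1.1 = i), d x := by
  classical
  rw [ν, Finsupp.sum_apply, Finsupp.sum, Finset.sum_filter]
  refine Finset.sum_congr rfl fun x _ => ?_
  simp [Finsupp.single_apply]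

lemma ν_apply_inr (d : {x // x ∈ S} →₀ ℕ) (j : Fin n) :
    ν S d (Sum.inr j) = ∑ x ∈ d.support.filter (fun x => x.1.2 = j), d x := by
  classical
  rw [ν, Finsupp.sum_apply, Finsupp.sum, Finset.sum_filter]
  refine Finset.sum_congr rfl fun x _ => ?_
  simp [Finsupp.single_apply]

lemma exists_same_col (d e : {x // x ∈ S} →₀ ℕ) (h : ν S d = ν S e)
    (x0 : {x // x ∈ S}) (hx0 : x0 ∈ d.support) :
    ∃ x ∈ e.support, x.1.2 = x0.1.2 := by
  classical
  by_contra hc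
  push_neg at hc
  have h1 : ν S e (Sum.inr x0.1.2) = 0 := by
    rw [ν_apply_inr]
    refine Finset.sum_eq_zero fun x hx => ?_
    simp only [Finset.mem_filter] at hx
    exact absurd hx.2 (hc x hx.1)
  have h2 : 0 < ν S d (Sum.inr x0.1.2) := by
    rw [ν_apply_inr]
    refine Finset.sum_pos' (fun _ _ => Nat.zero_le _) ⟨x0, ?_, ?_⟩
    · simp [hx0]
    · exact Finsupp.mem_support_iff.mp hx0 |>.bot_lt
  rw [h] at h2; omega

lemma exists_same_row (d e : {x // x ∈ S} →₀ ℕ) (h : ν S d = ν S e)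
    (x0 : {x // x ∈ S}) (hx0 : x0 ∈ d.support) :
    ∃ x ∈ e.support, x.1.1 = x0.1.1 := by
  classical
  by_contra hc
  push_neg at hc
  have h1 : ν S e (Sum.inl x0.1.1) = 0 := by
    rw [ν_apply_inl]
    refine Finset.sum_eq_zero fun x hx => ?_
    simp only [Finset.mem_filter] at hx
    exact absurd hx.2 (hc x hx.1)
  have h2 : 0 < ν S d (Sum.inl x0.1.1) := by
    rw [ν_apply_inl]
    refine Finset.sum_pos' (fun _ _ => Nat.zero_le _) ⟨x0, ?_, ?_⟩
    · simp [hx0]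
    · exact Finsupp.mem_support_iff.mp hx0 |>.bot_lt
  rw [h] at h2; omega

lemma ν_eq_zero (d : {x // x ∈ S} →₀ ℕ) (h : ν S d = 0) : d = 0 := by
  classical
  by_contra hd
  obtain ⟨x0, hx0⟩ := Finsupp.support_nonempty_iff.mpr hd
  have h2 : 0 < ν S d (Sum.inl x0.1.1) := by
    rw [ν_apply_inl]
    refine Finset.sum_pos' (fun _ _ => Nat.zero_le _) ⟨x0, ?_, ?_⟩
    · simp [hx0]
    · exact Finsupp.mem_support_iff.mp hx0 |>.bot_lt
  rw [h] at h2; simp at h2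


lemma span_le_ker :
    Ideal.span (Q S) ≤ RingHom.ker (φ S) := by
  rw [Ideal.span_le]
  rintro f ⟨i, k, j, l, h1, h2, h3, h4, rfl⟩
  simp only [SetLike.mem_coe, RingHom.mem_ker, map_sub, map_mul, φ, MvPolynomial.aeval_X]
  ring

lemma binomial_mem_ker (d e : {x // x ∈ S} →₀ ℕ) (h : ν S d = ν S e) :
    φ S (MvPolynomial.monomial d 1 - MvPolynomial.monomial e 1) = 0 := by
  rw [map_sub, phi_monomial, phi_monomial, h, sub_self]

lemma phi_monomial' (d : {x // x ∈ S} →₀ ℕ) (a : ℂ) :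
    φ S (MvPolynomial.monomial d a) = MvPolynomial.monomial (ν S d) a := by
  have h1 : (MvPolynomial.monomial d a) = a • MvPolynomial.monomial d (1:ℂ) := by
    rw [MvPolynomial.smul_monomial, smul_eq_mul, mul_one]
  have h2 : (MvPolynomial.monomial (ν S d) a) = a • MvPolynomial.monomial (ν S d) (1:ℂ) := by
    rw [MvPolynomial.smul_monomial, smul_eq_mul, mul_one]
  rw [h1, h2, map_smul, phi_monomial]

lemma ker_le_span
    (moves : ∀ d e : {x // x ∈ S} →₀ ℕ, ν S d = ν S e →
      MvPolynomial.monomial d 1 - MvPolynomial.monomial e 1 ∈ Ideal.span (Q S)) :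
    RingHom.ker (φ S) ≤ Ideal.span (Q S) := by
  classical
  suffices H : ∀ (N : ℕ) (f : MvPolynomial {x // x ∈ S} ℂ), f.support.card ≤ N →
      φ S f = 0 → f ∈ Ideal.span (Q S) by
    intro f hf
    exact H f.support.card f le_rfl (by rwa [RingHom.mem_ker] at hf)
  intro N
  induction N with
  | zero =>
      intro f hcard _
      have : f = 0 := by
        rw [← MvPolynomial.support_eq_empty, ← Finset.card_eq_zero]
        omega
      rw [this]; exact Ideal.zero_mem _
  | succ N ih =>
      intro f hcard hker
      by_cases hf0 : f = 0
      · rw [hf0]; exact Ideal.zero_mem _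
      obtain ⟨d, hd⟩ := (MvPolynomial.support_nonempty.mpr hf0)
      -- coefficient of ν d in φ f
      have hsum : φ S f = ∑ c ∈ f.support, MvPolynomial.monomial (ν S c) (f.coeff c) := by
        conv_lhs => rw [f.as_sum]
        rw [map_sum]
        exact Finset.sum_congr rfl fun c _ => phi_monomial' S c _
      have hcoeff : (0:ℂ) = ∑ c ∈ f.support.filter (fun c => ν S c = ν S d), f.coeff c := by
        have := congrArg (MvPolynomial.coeff (ν S d)) hsum
        rw [hker] at this
        simpa [MvPolynomial.coeff_sum, MvPolynomial.coeff_monomial, Finset.sum_filter,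
          eq_comm] using this
      -- find e ≠ d with same ν
      have hdmem : d ∈ f.support.filter (fun c => ν S c = ν S d) := by simp [hd]
      have hex : ∃ e ∈ f.support, e ≠ d ∧ ν S e = ν S d := by
        by_contra hno
        push_neg at hno
        have : f.support.filter (fun c => ν S c = ν S d) = {d} := by
          apply Finset.eq_singleton_iff_unique_mem.mpr
          refine ⟨hdmem, fun c hc => ?_⟩
          simp only [Finset.mem_filter] at hc
          by_contra hne
          exact hno c hc.1 hne hc.2
        rw [this, Finset.sum_singleton] at hcoeff
        exact (MvPolynomial.mem_support_iff.mp hd) hcoeff.symm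
      obtain ⟨e, hemem, hed, hnue⟩ := hex
      set b : MvPolynomial {x // x ∈ S} ℂ :=
        MvPolynomial.monomial d 1 - MvPolynomial.monomial e 1 with hb
      set g : MvPolynomial {x // x ∈ S} ℂ := f - f.coeff d • b with hg
      have hbker : φ S b = 0 := binomial_mem_ker S d e (hnue.symm ▸ rfl)
      have hgker : φ S g = 0 := by
        rw [hg, map_sub, map_smul, hbker, smul_zero, sub_zero, hker]
      have hgsupp : g.support ⊆ f.support.erase d := by
        intro c hc
        have hcg : g.coeff c ≠ 0 := MvPolynomial.mem_support_iff.mp hc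
        have hcoeffg : g.coeff c = f.coeff c - f.coeff d *
            ((if d = c then 1 else 0) - (if e = c then 1 else 0)) := by
          simp [hg, hb, MvPolynomial.coeff_sub, MvPolynomial.coeff_smul,
            MvPolynomial.coeff_monomial, smul_eq_mul, mul_sub]
        rw [Finset.mem_erase]
        constructor
        · rintro rfl
          rw [hcoeffg, if_pos rfl, if_neg hed] at hcg
          simp at hcg
        · rw [MvPolynomial.mem_support_iff]
          intro hfc
          rcases eq_or_ne c d with rfl | hcd
          · rw [hcoeffg, if_pos rfl, if_neg hed] at hcg; simp [hfc] at hcg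
          rcases eq_or_ne c e with rfl | hce
          · exact (MvPolynomial.mem_support_iff.mp hemem) hfc
          · rw [hcoeffg, if_neg (Ne.symm hcd), if_neg (Ne.symm hce)] at hcg
            simp [hfc] at hcg
      have hgcard : g.support.card ≤ N := by
        have h1 : (f.support.erase d).card < f.support.card := Finset.card_erase_lt_of_mem hd
        have h2 := Finset.card_le_card hgsupp
        omega
      have hgspan : g ∈ Ideal.span (Q S) := ih g hgcard hgker
      have hbspan : b ∈ Ideal.span (Q S) := moves d e hnue.symm
      have : f = g + f.coeff d • b := by rw [hg]; ring
      rw [this]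
      exact Ideal.add_mem _ hgspan (Submodule.smul_of_tower_mem _ _ hbspan)


section Graph

lemma qi_adj_iff (a b : Fin m ⊕ Fin n) :
    (qiGraph m n S).Adj a b ↔ ∃ i j, (i, j) ∈ S ∧
      ((a = Sum.inl i ∧ b = Sum.inr j) ∨ (a = Sum.inr j ∧ b = Sum.inl i)) := by
  rw [qiGraph, SimpleGraph.fromRel_adj]
  constructor
  · rintro ⟨hne, h | h⟩ <;> obtain ⟨p, hp, rfl, rfl⟩ := h
    · exact ⟨p.1, p.2, hp, Or.inl ⟨rfl, rfl⟩⟩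
    · exact ⟨p.1, p.2, hp, Or.inr ⟨rfl, rfl⟩⟩
  · rintro ⟨i, j, hij, ⟨rfl, rfl⟩ | ⟨rfl, rfl⟩⟩
    · exact ⟨by simp, Or.inl ⟨(i,j), hij, rfl, rfl⟩⟩
    · exact ⟨by simp, Or.inr ⟨(i,j), hij, rfl, rfl⟩⟩

variable (k : ℕ) (r : ℕ → Fin m) (c : ℕ → Fin n)

/-- rows with index taken mod `k` -/
def rt (t : ℕ) : Fin m := r (t % k)

/-- columns with index taken mod `k` -/
def ct (t : ℕ) : Fin n := c (t % k)

/-- the closed walk associated to an alternating cycle -/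
noncomputable def cycW (hd : ∀ t, (rt k r t, ct k c t) ∈ S)
    (he : ∀ t, (rt k r (t+1), ct k c t) ∈ S) :
    (j : ℕ) → j ≤ k → (qiGraph m n S).Walk (Sum.inl (rt k r (k - j))) (Sum.inl (rt k r k))
  | 0, _ => SimpleGraph.Walk.nil
  | (j+1), h =>
      SimpleGraph.Walk.cons
        (by
          rw [qi_adj_iff]
          exact ⟨rt k r (k - (j+1)), ct k c (k - (j+1)), hd _, Or.inl ⟨rfl, rfl⟩⟩)
        (SimpleGraph.Walk.cons
          (by
            rw [qi_adj_iff]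
            have hkj : k - j = (k - (j+1)) + 1 := by omega
            refine ⟨rt k r (k - j), ct k c (k - (j+1)), ?_, Or.inr ⟨rfl, rfl⟩⟩
            rw [hkj]
            exact he _)
          (cycW hd he j (by omega)))

variable (hd : ∀ t, (rt k r t, ct k c t) ∈ S) (he : ∀ t, (rt k r (t+1), ct k c t) ∈ S)

lemma cycW_length : ∀ (j : ℕ) (h : j ≤ k), (cycW S k r c hd he j h).length = 2 * j := by
  intro j
  induction j with
  | zero => intro h; rfl
  | succ j ih =>
      intro h
      show (SimpleGraph.Walk.cons _ (SimpleGraph.Walk.cons _ _)).length = _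
      rw [SimpleGraph.Walk.length_cons, SimpleGraph.Walk.length_cons, ih (by omega)]
      omega

lemma cycW_mem_support : ∀ (j : ℕ) (h : j ≤ k) (x : Fin m ⊕ Fin n),
    x ∈ (cycW S k r c hd he j h).support ↔
      x = Sum.inl (rt k r k) ∨
        ∃ u, k - j ≤ u ∧ u < k ∧ (x = Sum.inl (rt k r u) ∨ x = Sum.inr (ct k c u)) := by
  intro j
  induction j with
  | zero =>
      intro h x
      show x ∈ (SimpleGraph.Walk.nil).support ↔ _
      simp only [SimpleGraph.Walk.support_nil, List.mem_singleton]
      constructor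
      · intro hx; exact Or.inl hx
      · rintro (hx | ⟨u, hu1, hu2, _⟩)
        · exact hx
        · omega
  | succ j ih =>
      intro h x
      show x ∈ (SimpleGraph.Walk.cons _ (SimpleGraph.Walk.cons _ _)).support ↔ _
      rw [SimpleGraph.Walk.support_cons, SimpleGraph.Walk.support_cons]
      simp only [List.mem_cons]
      rw [ih (by omega)]
      constructor
      · rintro (hx | hx | hx | ⟨u, hu1, hu2, hx⟩)
        · exact Or.inr ⟨k - (j+1), le_refl _, by omega, Or.inl hx⟩
        · exact Or.inr ⟨k - (j+1), le_refl _, by omega, Or.inr hx⟩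
        · exact Or.inl hx
        · exact Or.inr ⟨u, by omega, hu2, hx⟩
      · rintro (hx | ⟨u, hu1, hu2, hx⟩)
        · exact Or.inr (Or.inr (Or.inl hx))
        · rcases eq_or_lt_of_le hu1 with hequ | hltu
          · rcases hx with hx | hx
            · exact Or.inl (by rw [hx, hequ])
            · exact Or.inr (Or.inl (by rw [hx, hequ]))
          · exact Or.inr (Or.inr (Or.inr ⟨u, by omega, hu2, hx⟩))

lemma cycW_mem_edges : ∀ (j : ℕ) (h : j ≤ k) (x : Sym2 (Fin m ⊕ Fin n)),
    x ∈ (cycW S k r c hd he j h).edges ↔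
      ∃ u, k - j ≤ u ∧ u < k ∧
        (x = s(Sum.inl (rt k r u), Sum.inr (ct k c u)) ∨
         x = s(Sum.inr (ct k c u), Sum.inl (rt k r (u+1)))) := by
  intro j
  induction j with
  | zero =>
      intro h x
      show x ∈ (SimpleGraph.Walk.nil).edges ↔ _
      simp only [SimpleGraph.Walk.edges_nil, List.not_mem_nil, false_iff]
      rintro ⟨u, hu1, hu2, _⟩; omega
  | succ j ih =>
      intro h x
      show x ∈ (SimpleGraph.Walk.cons _ (SimpleGraph.Walk.cons _ _)).edges ↔ _
      rw [SimpleGraph.Walk.edges_cons, SimpleGraph.Walk.edges_cons]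
      simp only [List.mem_cons]
      rw [ih (by omega)]
      have hkj : k - j = (k - (j+1)) + 1 := by omega
      constructor
      · rintro (hx | hx | ⟨u, hu1, hu2, hx⟩)
        · exact ⟨k - (j+1), le_refl _, by omega, Or.inl hx⟩
        · refine ⟨k - (j+1), le_refl _, by omega, Or.inr ?_⟩
          rw [hx, ← hkj]
        · exact ⟨u, by omega, hu2, hx⟩
      · rintro ⟨u, hu1, hu2, hx⟩
        rcases eq_or_lt_of_le hu1 with hequ | hltu
        · rcases hx with hx | hx
          · exact Or.inl (by rw [hx, hequ])
          · refine Or.inr (Or.inl ?_)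
            rw [hx, ← hequ, ← hkj]
        · exact Or.inr (Or.inr ⟨u, by omega, hu2, hx⟩)


lemma rt_ne (hrinj : ∀ t1, t1 < k → ∀ t2, t2 < k → r t1 = r t2 → t1 = t2)
    (u v : ℕ) (huv : u < v) (hv : v ≤ k) (h1 : v < k ∨ 1 ≤ u) :
    rt k r u ≠ rt k r v := by
  intro heq
  have hu : u < k := by omega
  have hu' : u % k = u := Nat.mod_eq_of_lt hu
  rcases eq_or_lt_of_le hv with rfl | hvk
  · have hv' : v % v = 0 := Nat.mod_self v
    rw [rt, rt, hu', hv'] at heq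
    have h0 : 0 < v := by omega
    have := hrinj u hu 0 h0 heq
    omega
  · have hv' : v % k = v := Nat.mod_eq_of_lt hvk
    rw [rt, rt, hu', hv'] at heq
    have := hrinj u hu v hvk heq
    omega

lemma ct_ne (hcinj : ∀ t1, t1 < k → ∀ t2, t2 < k → c t1 = c t2 → t1 = t2)
    (u v : ℕ) (huv : u < v) (hv : v < k) : ct k c u ≠ ct k c v := by
  intro heq
  have hu : u < k := by omega
  rw [ct, ct, Nat.mod_eq_of_lt hu, Nat.mod_eq_of_lt hv] at heq
  have := hcinj u hu v hv heq
  omega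

lemma cycW_support_nodup
    (hrinj : ∀ t1, t1 < k → ∀ t2, t2 < k → r t1 = r t2 → t1 = t2)
    (hcinj : ∀ t1, t1 < k → ∀ t2, t2 < k → c t1 = c t2 → t1 = t2) :
    ∀ (j : ℕ) (h : j ≤ k), j < k → (cycW S k r c hd he j h).support.Nodup := by
  intro j
  induction j with
  | zero =>
      intro h hj
      show (SimpleGraph.Walk.nil (u := Sum.inl (rt k r k))).support.Nodup
      simp
  | succ j ih =>
      intro h hj
      show (SimpleGraph.Walk.cons _ (SimpleGraph.Walk.cons _ _)).support.Nodup
      rw [SimpleGraph.Walk.support_cons, SimpleGraph.Walk.support_cons]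
      have hu0 : 1 ≤ k - (j+1) := by omega
      refine List.nodup_cons.mpr ⟨?_, List.nodup_cons.mpr ⟨?_, ih (by omega) (by omega)⟩⟩
      · rw [List.mem_cons]
        rintro (hx | hx)
        · exact absurd hx (by simp)
        · rw [cycW_mem_support] at hx
          rcases hx with hx | ⟨u, hu1, hu2, hx | hx⟩
          · have := rt_ne k r hrinj (k - (j+1)) k (by omega) le_rfl (Or.inr hu0)
            exact this (Sum.inl.inj hx)
          · have := rt_ne k r hrinj (k - (j+1)) u (by omega) (by omega) (Or.inl hu2)
            exact this (Sum.inl.inj hx)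
          · exact absurd hx (by simp)
      · intro hx
        rw [cycW_mem_support] at hx
        rcases hx with hx | ⟨u, hu1, hu2, hx | hx⟩
        · exact absurd hx (by simp)
        · exact absurd hx (by simp)
        · have := ct_ne k c hcinj (k - (j+1)) u (by omega) hu2
          exact this (Sum.inr.inj hx)

lemma cycW_edges_nodup
    (hrinj : ∀ t1, t1 < k → ∀ t2, t2 < k → r t1 = r t2 → t1 = t2)
    (hcinj : ∀ t1, t1 < k → ∀ t2, t2 < k → c t1 = c t2 → t1 = t2)
    (hk2 : 2 ≤ k) :
    ∀ (j : ℕ) (h : j ≤ k), (cycW S k r c hd he j h).edges.Nodup := by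
  intro j
  induction j with
  | zero =>
      intro h
      show (SimpleGraph.Walk.nil (u := Sum.inl (rt k r k))).edges.Nodup
      simp
  | succ j ih =>
      intro h
      show (SimpleGraph.Walk.cons _ (SimpleGraph.Walk.cons _ _)).edges.Nodup
      rw [SimpleGraph.Walk.edges_cons, SimpleGraph.Walk.edges_cons]
      set u0 := k - (j+1) with hu0def
      have hu0k : u0 < k := by omega
      refine List.nodup_cons.mpr ⟨?_, List.nodup_cons.mpr ⟨?_, ih (by omega)⟩⟩
      · rw [List.mem_cons]
        rintro (hx | hx)
        · rw [Sym2.eq_iff] at hx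
          rcases hx with ⟨hx1, hx2⟩ | ⟨hx1, hx2⟩
          · exact absurd hx2 (by simp)
          · have hkj : k - j = u0 + 1 := by omega
            rw [hkj] at hx1
            have := rt_ne k r hrinj u0 (u0+1) (by omega) (by omega) (by omega)
            exact this (Sum.inl.inj hx1)
        · rw [cycW_mem_edges] at hx
          obtain ⟨u, hu1, hu2, hx | hx⟩ := hx
          · rw [Sym2.eq_iff] at hx
            rcases hx with ⟨hx1, hx2⟩ | ⟨hx1, hx2⟩
            · exact ct_ne k c hcinj u0 u (by omega) hu2 (Sum.inr.inj hx2)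
            · exact absurd hx1 (by simp)
          · rw [Sym2.eq_iff] at hx
            rcases hx with ⟨hx1, hx2⟩ | ⟨hx1, hx2⟩
            · exact absurd hx1 (by simp)
            · exact ct_ne k c hcinj u0 u (by omega) hu2 (Sum.inr.inj hx2)
      · intro hx
        rw [cycW_mem_edges] at hx
        obtain ⟨u, hu1, hu2, hx | hx⟩ := hx
        · rw [Sym2.eq_iff] at hx
          rcases hx with ⟨hx1, hx2⟩ | ⟨hx1, hx2⟩
          · exact absurd hx1 (by simp)
          · exact ct_ne k c hcinj u0 u (by omega) hu2 (Sum.inr.inj hx1)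
        · rw [Sym2.eq_iff] at hx
          rcases hx with ⟨hx1, hx2⟩ | ⟨hx1, hx2⟩
          · exact ct_ne k c hcinj u0 u (by omega) hu2 (Sum.inr.inj hx1)
          · exact absurd hx1 (by simp)

lemma cycW_tail_nodup
    (hrinj : ∀ t1, t1 < k → ∀ t2, t2 < k → r t1 = r t2 → t1 = t2)
    (hcinj : ∀ t1, t1 < k → ∀ t2, t2 < k → c t1 = c t2 → t1 = t2)
    (hk2 : 2 ≤ k) :
    ∀ (j : ℕ) (h : j ≤ k), j = k → (cycW S k r c hd he j h).support.tail.Nodup := by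
  intro j
  cases j with
  | zero => intro h hj; omega
  | succ j =>
      intro h hj
      show (SimpleGraph.Walk.cons _ (SimpleGraph.Walk.cons _ _)).support.tail.Nodup
      rw [SimpleGraph.Walk.support_cons, SimpleGraph.Walk.support_cons, List.tail_cons]
      refine List.nodup_cons.mpr ⟨?_, cycW_support_nodup S k r c hd he hrinj hcinj j (by omega) (by omega)⟩
      intro hx
      rw [cycW_mem_support] at hx
      rcases hx with hx | ⟨u, hu1, hu2, hx | hx⟩
      · exact absurd hx (by simp)
      · exact absurd hx (by simp)
      · have hkj1 : k - (j+1) = 0 := by omega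
        have hu1' : 1 ≤ u := by omega
        have := ct_ne k c hcinj (k - (j+1)) u (by omega) hu2
        exact this (Sum.inr.inj hx)

lemma exists_chord (hS : ChordalBipartite (qiGraph m n S)) (hk : 3 ≤ k)
    (hrinj : ∀ t1, t1 < k → ∀ t2, t2 < k → r t1 = r t2 → t1 = t2)
    (hcinj : ∀ t1, t1 < k → ∀ t2, t2 < k → c t1 = c t2 → t1 = t2)
    (hdm : ∀ t, t < k → (r t, c t) ∈ S) (hem : ∀ t, t < k → (r ((t+1) % k), c t) ∈ S) :
    ∃ a b, a < k ∧ b < k ∧ (r a, c b) ∈ S ∧ b ≠ a ∧ a ≠ (b + 1) % k := by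
  have hkpos : 0 < k := by omega
  have hd' : ∀ t, (rt k r t, ct k c t) ∈ S := fun t => hdm _ (Nat.mod_lt _ hkpos)
  have he' : ∀ t, (rt k r (t+1), ct k c t) ∈ S := by
    intro t
    have h1 : (t+1) % k = (t % k + 1) % k := by
      conv_lhs => rw [Nat.add_mod]
      rw [Nat.mod_eq_of_lt (show 1 < k by omega)]
    show (r ((t+1) % k), c (t % k)) ∈ S
    rw [h1]
    exact hem (t % k) (Nat.mod_lt _ hkpos)
  have hstart : (Sum.inl (rt k r (k - k)) : Fin m ⊕ Fin n) = Sum.inl (rt k r k) := by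
    have h0 : k - k = 0 := by omega
    rw [h0]
    show Sum.inl (r (0 % k)) = Sum.inl (r (k % k))
    rw [Nat.zero_mod, Nat.mod_self]
  set C0 := cycW S k r c hd' he' k le_rfl with hC0
  set C := C0.copy hstart rfl with hC
  have hcyc : C.IsCycle := by
    rw [SimpleGraph.Walk.isCycle_def]
    refine ⟨?_, ?_, ?_⟩
    · rw [SimpleGraph.Walk.isTrail_def, hC, SimpleGraph.Walk.edges_copy]
      exact cycW_edges_nodup S k r c hd' he' hrinj hcinj (by omega) k le_rfl
    · intro hnil
      have hlen := congrArg SimpleGraph.Walk.length hnil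
      rw [hC, SimpleGraph.Walk.length_copy, cycW_length, SimpleGraph.Walk.length_nil] at hlen
      omega
    · rw [hC, SimpleGraph.Walk.support_copy]
      exact cycW_tail_nodup S k r c hd' he' hrinj hcinj (by omega) k le_rfl rfl
  have hlen : 6 ≤ C.length := by
    rw [hC, SimpleGraph.Walk.length_copy, cycW_length]
    omega
  obtain ⟨e, hedge, hne, hsupp⟩ := hS _ C hcyc hlen
  -- decode the chord
  have hsupp' : ∀ x ∈ e, x ∈ C0.support := by
    intro x hx
    have := hsupp x hx
    rwa [hC, SimpleGraph.Walk.support_copy] at this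
  have hne' : e ∉ C0.edges := by rwa [hC, SimpleGraph.Walk.edges_copy] at hne
  -- get the pair
  obtain ⟨a, b⟩ := e
  rw [SimpleGraph.mem_edgeSet, qi_adj_iff] at hedge
  obtain ⟨i, j, hij, hab⟩ := hedge
  have key : ∀ (i : Fin m) (j : Fin n), (i, j) ∈ S →
      Sum.inl i ∈ C0.support → Sum.inr j ∈ C0.support →
      s(Sum.inl i, Sum.inr j) ∉ C0.edges →
      ∃ a b, a < k ∧ b < k ∧ (r a, c b) ∈ S ∧ b ≠ a ∧ a ≠ (b + 1) % k := by
    intro i j hij hi hj hnotedge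
    rw [cycW_mem_support] at hi hj
    have hiex : ∃ α, α < k ∧ i = r α := by
      rcases hi with hi | ⟨u, _, hu2, hi | hi⟩
      · refine ⟨0, by omega, ?_⟩
        have : rt k r k = r 0 := by show r (k % k) = r 0; rw [Nat.mod_self]
        rw [← this]; exact Sum.inl.inj hi
      · refine ⟨u, hu2, ?_⟩
        have : rt k r u = r u := by show r (u % k) = r u; rw [Nat.mod_eq_of_lt hu2]
        rw [← this]; exact Sum.inl.inj hi
      · exact absurd hi (by simp)
    have hjex : ∃ β, β < k ∧ j = c β := by
      rcases hj with hj | ⟨u, _, hu2, hj | hj⟩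
      · exact absurd hj (by simp)
      · exact absurd hj (by simp)
      · refine ⟨u, hu2, ?_⟩
        have : ct k c u = c u := by show c (u % k) = c u; rw [Nat.mod_eq_of_lt hu2]
        rw [← this]; exact Sum.inr.inj hj
    obtain ⟨α, hα, rfl⟩ := hiex
    obtain ⟨β, hβ, rfl⟩ := hjex
    refine ⟨α, β, hα, hβ, hij, ?_, ?_⟩
    · rintro rfl
      apply hnotedge
      rw [cycW_mem_edges]
      refine ⟨β, by omega, hβ, Or.inl ?_⟩
      have h1 : rt k r β = r β := by show r (β % k) = r β; rw [Nat.mod_eq_of_lt hβ]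
      have h2 : ct k c β = c β := by show c (β % k) = c β; rw [Nat.mod_eq_of_lt hβ]
      rw [h1, h2]
    · intro hαβ
      apply hnotedge
      rw [cycW_mem_edges]
      refine ⟨β, by omega, hβ, Or.inr ?_⟩
      have h1 : rt k r (β+1) = r ((β+1) % k) := rfl
      have h2 : ct k c β = c β := by show c (β % k) = c β; rw [Nat.mod_eq_of_lt hβ]
      rw [h1, h2, ← hαβ, Sym2.eq_swap]
  rcases hab with ⟨rfl, rfl⟩ | ⟨rfl, rfl⟩
  · exact key i j hij (hsupp' _ (Sym2.mem_mk_left _ _)) (hsupp' _ (Sym2.mem_mk_right _ _)) hne'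
  · refine key i j hij (hsupp' _ (Sym2.mem_mk_right _ _)) (hsupp' _ (Sym2.mem_mk_left _ _)) ?_
    rw [Sym2.eq_swap]
    exact hne'

end Graph

section Cycle

noncomputable def XS (p : Fin m × Fin n) : MvPolynomial {x // x ∈ S} ℂ :=
  if h : p ∈ S then MvPolynomial.X ⟨p, h⟩ else 1

lemma XS_mem (p : Fin m × Fin n) (h : p ∈ S) : XS S p = MvPolynomial.X ⟨p, h⟩ := dif_pos h

lemma modRotInj (k a : ℕ) (t1 t2 : ℕ) (h1 : t1 < k) (h2 : t2 < k)
    (h : (t1 + a) % k = (t2 + a) % k) : t1 = t2 := by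
  have h3 : t1 ≡ t2 [MOD k] := Nat.ModEq.add_right_cancel' a h
  have := h3.eq_of_lt_of_lt h1 h2
  exact this

/-- the statement of the cycle binomial lemma, for strong induction -/
def CycStmt (k : ℕ) : Prop :=
  ∀ (r : ℕ → Fin m) (c : ℕ → Fin n), 1 ≤ k →
    (∀ t1, t1 < k → ∀ t2, t2 < k → r t1 = r t2 → t1 = t2) →
    (∀ t1, t1 < k → ∀ t2, t2 < k → c t1 = c t2 → t1 = t2) →
    (∀ t, t < k → (r t, c t) ∈ S) → (∀ t, t < k → (r ((t+1) % k), c t) ∈ S) →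
    (∏ t ∈ Finset.range k, XS S (r t, c t)) -
      (∏ t ∈ Finset.range k, XS S (r ((t+1) % k), c t)) ∈ Ideal.span (Q S)

lemma cycle_split (k : ℕ) (r : ℕ → Fin m) (c : ℕ → Fin n) (hk3 : 3 ≤ k)
    (hrinj : ∀ t1, t1 < k → ∀ t2, t2 < k → r t1 = r t2 → t1 = t2)
    (hcinj : ∀ t1, t1 < k → ∀ t2, t2 < k → c t1 = c t2 → t1 = t2)
    (hd : ∀ t, t < k → (r t, c t) ∈ S) (he : ∀ t, t < k → (r ((t+1) % k), c t) ∈ S)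
    (b : ℕ) (hb1 : 1 ≤ b) (hb2 : b ≤ k - 2) (hch : (r 0, c b) ∈ S)
    (IH : ∀ k', k' < k → CycStmt S k') :
    (∏ t ∈ Finset.range k, XS S (r t, c t)) -
      (∏ t ∈ Finset.range k, XS S (r ((t+1) % k), c t)) ∈ Ideal.span (Q S) := by
  set D : ℕ → MvPolynomial {x // x ∈ S} ℂ := fun t => XS S (r t, c t) with hD
  set E : ℕ → MvPolynomial {x // x ∈ S} ℂ := fun t => XS S (r ((t+1) % k), c t) with hE
  set ch : MvPolynomial {x // x ∈ S} ℂ := XS S (r 0, c b) with hch'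
  -- the first (C1) cycle
  have hC1 := IH (b+1) (by omega) r c (by omega)
    (fun t1 h1 t2 h2 => hrinj t1 (by omega) t2 (by omega))
    (fun t1 h1 t2 h2 => hcinj t1 (by omega) t2 (by omega))
    (fun t ht => hd t (by omega))
    (by
      intro t ht
      rcases eq_or_lt_of_le (Nat.lt_succ_iff.mp ht) with rfl | htb
      · rw [Nat.mod_self]; exact hch
      · rw [Nat.mod_eq_of_lt (by omega : t + 1 < b + 1)]
        have := he t (by omega)
        rwa [Nat.mod_eq_of_lt (by omega : t + 1 < k)] at this)
  have e1 : (∏ t ∈ Finset.range (b+1), XS S (r ((t+1) % (b+1)), c t)) =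
      (∏ t ∈ Finset.range b, E t) * ch := by
    rw [Finset.prod_range_succ]
    congr 1
    · refine Finset.prod_congr rfl fun t ht => ?_
      rw [Finset.mem_range] at ht
      rw [Nat.mod_eq_of_lt (by omega : t + 1 < b + 1), hE]
      simp only []
      rw [Nat.mod_eq_of_lt (by omega : t + 1 < k)]
    · rw [Nat.mod_self, hch']
  rw [e1] at hC1
  -- the second (C2) cycle
  set r2 : ℕ → Fin m := fun t => if t = 0 then r 0 else r (b + t) with hr2
  set c2 : ℕ → Fin n := fun t => c (b + t) with hc2
  have hC2 := IH (k - b) (by omega) r2 c2 (by omega)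
    (by
      intro t1 h1 t2 h2 heq
      rcases Nat.eq_zero_or_pos t1 with rfl | ht1 <;> rcases Nat.eq_zero_or_pos t2 with rfl | ht2
      · rfl
      · rw [hr2] at heq; simp only [if_pos, if_neg (by omega : ¬ t2 = 0)] at heq
        have := hrinj 0 (by omega) (b + t2) (by omega) (by simpa using heq)
        omega
      · rw [hr2] at heq; simp only [if_pos, if_neg (by omega : ¬ t1 = 0)] at heq
        have := hrinj (b + t1) (by omega) 0 (by omega) (by simpa using heq)
        omega
      · rw [hr2] at heq; simp only [if_neg (by omega : ¬ t1 = 0), if_neg (by omega : ¬ t2 = 0)] at heq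
        have := hrinj (b + t1) (by omega) (b + t2) (by omega) heq
        omega)
    (by
      intro t1 h1 t2 h2 heq
      rw [hc2] at heq
      have := hcinj (b + t1) (by omega) (b + t2) (by omega) heq
      omega)
    (by
      intro t ht
      rcases Nat.eq_zero_or_pos t with rfl | ht0
      · simpa [hr2, hc2] using hch
      · rw [hr2, hc2]; simp only [if_neg (by omega : ¬ t = 0)]
        exact hd (b + t) (by omega))
    (by
      intro t ht
      rcases eq_or_lt_of_le (Nat.lt_succ_iff.mp (by omega : t < (k - b - 1) + 1)) with htl | htl
      · -- t = k - b - 1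
        have h1 : t + 1 = k - b := by omega
        rw [h1, Nat.mod_self, hr2, hc2]
        simp only [if_pos]
        have h2 : b + t = k - 1 := by omega
        rw [h2]
        have := he (k-1) (by omega)
        rwa [(by omega : k - 1 + 1 = k), Nat.mod_self] at this
      · rw [Nat.mod_eq_of_lt (by omega : t + 1 < k - b), hr2, hc2]
        simp only [if_neg (by omega : ¬ t + 1 = 0)]
        rw [(by omega : b + (t+1) = b + t + 1)]
        have := he (b + t) (by omega)
        rwa [Nat.mod_eq_of_lt (by omega : b + t + 1 < k)] at this)
  have e2 : (∏ t ∈ Finset.range (k-b), XS S (r2 t, c2 t)) =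
      (∏ t ∈ Finset.range (k-b-1), D (b+1+t)) * ch := by
    rw [(by omega : k - b = (k - b - 1) + 1), Finset.prod_range_succ']
    congr 1
    · refine Finset.prod_congr rfl fun t ht => ?_
      rw [hr2, hc2, hD]
      simp only [if_neg (by omega : ¬ t + 1 = 0)]
      have harith : b + (t + 1) = b + 1 + t := by omega
      rw [harith]
  have e3 : (∏ t ∈ Finset.range (k-b), XS S (r2 ((t+1) % (k-b)), c2 t)) =
      ∏ t ∈ Finset.range (k-b), E (b+t) := by
    refine Finset.prod_congr rfl fun t ht => ?_
    rw [Finset.mem_range] at ht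
    rcases eq_or_lt_of_le (Nat.lt_succ_iff.mp (by omega : t < (k - b - 1) + 1)) with htl | htl
    · have h1 : t + 1 = k - b := by omega
      rw [h1, Nat.mod_self, hr2, hc2, hE]
      simp only [if_pos]
      rw [(by omega : b + t + 1 = k), Nat.mod_self]
    · rw [Nat.mod_eq_of_lt (by omega : t + 1 < k - b), hr2, hc2, hE]
      simp only [if_neg (by omega : ¬ t + 1 = 0)]
      rw [(by omega : b + (t+1) = b + t + 1), Nat.mod_eq_of_lt (by omega : b + t + 1 < k)]
  rw [e2, e3] at hC2
  -- decompose the products over range k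
  have e4 : (∏ t ∈ Finset.range k, D t) =
      (∏ t ∈ Finset.range (b+1), D t) * ∏ t ∈ Finset.range (k-b-1), D (b+1+t) := by
    have := Finset.prod_range_add D (b+1) (k-b-1)
    rwa [(by omega : b + 1 + (k - b - 1) = k)] at this
  have e5 : (∏ t ∈ Finset.range k, E t) =
      (∏ t ∈ Finset.range b, E t) * ∏ t ∈ Finset.range (k-b), E (b+t) := by
    have := Finset.prod_range_add E b (k-b)
    rwa [(by omega : b + (k - b) = k)] at this
  have key : (∏ t ∈ Finset.range k, D t) - (∏ t ∈ Finset.range k, E t) =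
      (∏ t ∈ Finset.range (k-b-1), D (b+1+t)) *
        ((∏ t ∈ Finset.range (b+1), D t) - (∏ t ∈ Finset.range b, E t) * ch) +
      (∏ t ∈ Finset.range b, E t) *
        ((∏ t ∈ Finset.range (k-b-1), D (b+1+t)) * ch - ∏ t ∈ Finset.range (k-b), E (b+t)) := by
    rw [e4, e5]; ring
  have hD1 : (∏ t ∈ Finset.range k, XS S (r t, c t)) = ∏ t ∈ Finset.range k, D t := rfl
  have hE1 : (∏ t ∈ Finset.range k, XS S (r ((t+1) % k), c t)) = ∏ t ∈ Finset.range k, E t := rfl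
  rw [hD1, hE1, key]
  exact Ideal.add_mem _ (Ideal.mul_mem_left _ _ hC1) (Ideal.mul_mem_left _ _ hC2)

lemma cycle_binomial (hS : ChordalBipartite (qiGraph m n S)) : ∀ k, CycStmt S k := by
  intro k
  induction k using Nat.strong_induction_on with
  | _ k IH =>
  intro r c hk1 hrinj hcinj hd he
  rcases (by omega : k = 1 ∨ k = 2 ∨ 3 ≤ k) with rfl | rfl | hk3
  · rw [Finset.prod_range_one, Finset.prod_range_one, (by norm_num : (0+1) % 1 = 0), sub_self]
    exact Ideal.zero_mem _
  · rw [Finset.prod_range_succ, Finset.prod_range_one,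
      Finset.prod_range_succ, Finset.prod_range_one]
    norm_num
    have h00 := hd 0 (by omega)
    have h11 := hd 1 (by omega)
    have h10 := he 0 (by omega)
    have h01 := he 1 (by omega)
    norm_num at h10 h01
    rw [XS_mem S _ h00, XS_mem S _ h11, XS_mem S _ h10, XS_mem S _ h01]
    apply Ideal.subset_span
    exact ⟨r 0, r 1, c 0, c 1, h00, h11, h01, h10, by ring⟩
  · obtain ⟨a, b, ha, hb, hchord, hba, hab⟩ :=
      exists_chord S k r c hS (by omega) hrinj hcinj hd he
    have hkpos : 0 < k := by omega
    set u : ℕ → ℕ := fun t => (t + a) % k with hu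
    have huk : ∀ t, u t < k := fun t => Nat.mod_lt _ hkpos
    set r' : ℕ → Fin m := fun t => r (u t) with hr'
    set c' : ℕ → Fin n := fun t => c (u t) with hc'
    set b' : ℕ := (b + (k - a)) % k with hb'
    have hub' : u b' = b := by
      show ((b + (k - a)) % k + a) % k = b
      rw [Nat.mod_add_mod, (by omega : b + (k - a) + a = b + k), Nat.add_mod_right,
        Nat.mod_eq_of_lt hb]
    have hb'k : b' < k := Nat.mod_lt _ hkpos
    have hu0 : u 0 = a := by
      show (0 + a) % k = a
      rw [Nat.zero_add, Nat.mod_eq_of_lt ha]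
    have hrinj' : ∀ t1, t1 < k → ∀ t2, t2 < k → r' t1 = r' t2 → t1 = t2 := by
      intro t1 h1 t2 h2 heq
      exact modRotInj k a t1 t2 h1 h2 (hrinj (u t1) (huk t1) (u t2) (huk t2) heq)
    have hcinj' : ∀ t1, t1 < k → ∀ t2, t2 < k → c' t1 = c' t2 → t1 = t2 := by
      intro t1 h1 t2 h2 heq
      exact modRotInj k a t1 t2 h1 h2 (hcinj (u t1) (huk t1) (u t2) (huk t2) heq)
    have hd' : ∀ t, t < k → (r' t, c' t) ∈ S := fun t ht => hd (u t) (huk t)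
    have hmod : ∀ t : ℕ, ((t+1) % k + a) % k = (u t + 1) % k := by
      intro t
      show ((t+1) % k + a) % k = ((t + a) % k + 1) % k
      rw [Nat.mod_add_mod, Nat.mod_add_mod]
      congr 1
      omega
    have he' : ∀ t, t < k → (r' ((t+1) % k), c' t) ∈ S := by
      intro t ht
      show (r (((t+1) % k + a) % k), c (u t)) ∈ S
      rw [hmod t]
      exact he (u t) (huk t)
    have hb'1 : 1 ≤ b' := by
      rcases Nat.eq_zero_or_pos b' with h0 | h0
      · exact absurd (by rw [← hub', h0, hu0]) hba
      · exact h0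
    have hb'2 : b' ≤ k - 2 := by
      by_contra hgt
      have hb'e : b' = k - 1 := by omega
      apply hab
      have hcalc : (b + 1) % k = a := by
        rw [← hub']
        show ((b' + a) % k + 1) % k = a
        rw [Nat.mod_add_mod, hb'e, (by omega : k - 1 + a + 1 = a + k), Nat.add_mod_right,
          Nat.mod_eq_of_lt ha]
      exact hcalc.symm
    have hch2 : (r' 0, c' b') ∈ S := by
      show (r (u 0), c (u b')) ∈ S
      rw [hu0, hub']
      exact hchord
    have hsplit := cycle_split S k r' c' hk3 hrinj' hcinj' hd' he' b' hb'1 hb'2 hch2 IH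
    have hinv : ∀ t, t < k → ((u t) + (k - a)) % k = t := by
      intro t ht
      show ((t + a) % k + (k - a)) % k = t
      rw [Nat.mod_add_mod, (by omega : t + a + (k - a) = t + k), Nat.add_mod_right,
        Nat.mod_eq_of_lt ht]
    have hinv2 : ∀ t, t < k → u ((t + (k - a)) % k) = t := by
      intro t ht
      show ((t + (k - a)) % k + a) % k = t
      rw [Nat.mod_add_mod, (by omega : t + (k - a) + a = t + k), Nat.add_mod_right,
        Nat.mod_eq_of_lt ht]
    have hP : (∏ t ∈ Finset.range k, XS S (r' t, c' t)) =
        ∏ t ∈ Finset.range k, XS S (r t, c t) := by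
      refine Finset.prod_nbij' u (fun t => (t + (k - a)) % k) ?_ ?_ ?_ ?_ ?_
      · intro t ht; exact Finset.mem_range.mpr (huk t)
      · intro t ht; exact Finset.mem_range.mpr (Nat.mod_lt _ hkpos)
      · intro t ht; exact hinv t (Finset.mem_range.mp ht)
      · intro t ht; exact hinv2 t (Finset.mem_range.mp ht)
      · intro t ht; rfl
    have hE2 : (∏ t ∈ Finset.range k, XS S (r' ((t+1) % k), c' t)) =
        ∏ t ∈ Finset.range k, XS S (r ((t+1) % k), c t) := by
      refine Finset.prod_nbij' u (fun t => (t + (k - a)) % k) ?_ ?_ ?_ ?_ ?_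
      · intro t ht; exact Finset.mem_range.mpr (huk t)
      · intro t ht; exact Finset.mem_range.mpr (Nat.mod_lt _ hkpos)
      · intro t ht; exact hinv t (Finset.mem_range.mp ht)
      · intro t ht; exact hinv2 t (Finset.mem_range.mp ht)
      · intro t ht
        show XS S (r (((t+1) % k + a) % k), c (u t)) = XS S (r ((u t + 1) % k), c (u t))
        rw [hmod t]
    rw [hP, hE2] at hsplit
    exact hsplit

end Cycle

section AltCycle

/-- membership of a pair in the support of a finsupp on the subtype -/
def PM (d : {x // x ∈ S} →₀ ℕ) (p : Fin m × Fin n) : Prop :=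
  ∃ x ∈ d.support, (x : Fin m × Fin n) = p

/-- an alternating closed walk of length `k` -/
def AW (d e : {x // x ∈ S} →₀ ℕ) (k : ℕ) : Prop :=
  0 < k ∧ ∃ (r : ℕ → Fin m) (c : ℕ → Fin n),
    (∀ t, t < k → PM S d (r t, c t)) ∧ (∀ t, t < k → PM S e (r ((t+1) % k), c t))

lemma exists_AW (d e : {x // x ∈ S} →₀ ℕ) (hν : ν S d = ν S e) (hd0 : d ≠ 0) :
    ∃ k, AW S d e k := by
  classical
  obtain ⟨x0, hx0⟩ := Finsupp.support_nonempty_iff.mpr hd0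
  -- Good pairs
  set Good : ({x // x ∈ S} × {x // x ∈ S}) → Prop :=
    fun p => p.1 ∈ d.support ∧ p.2 ∈ e.support ∧ (p.2 : Fin m × Fin n).2 = (p.1 : Fin m × Fin n).2
    with hGood
  have hstep : ∀ p, Good p → ∃ q, (Good q ∧ (q.1 : Fin m × Fin n).1 = (p.2 : Fin m × Fin n).1) := by
    rintro p ⟨h1, h2, h3⟩
    obtain ⟨x, hx, hxr⟩ := exists_same_row S e d hν.symm p.2 h2
    obtain ⟨y, hy, hyc⟩ := exists_same_col S d e hν x hx
    exact ⟨(x, y), ⟨hx, hy, hyc⟩, hxr⟩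
  obtain ⟨y0, hy0, hy0c⟩ := exists_same_col S d e hν x0 hx0
  set g : ℕ → ({x // x ∈ S} × {x // x ∈ S}) := fun t =>
    Nat.rec (x0, y0) (fun _ p => if h : Good p then Classical.choose (hstep p h) else p) t
    with hg
  have hG : ∀ t, Good (g t) := by
    intro t
    induction t with
    | zero => exact ⟨hx0, hy0, hy0c⟩
    | succ t ih =>
        show Good (if h : Good (g t) then Classical.choose (hstep (g t) h) else (g t))
        rw [dif_pos ih]
        exact (Classical.choose_spec (hstep (g t) ih)).1
  have hlink : ∀ t, ((g (t+1)).1 : Fin m × Fin n).1 = ((g t).2 : Fin m × Fin n).1 := by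
    intro t
    have h1 : g (t+1) = if h : Good (g t) then Classical.choose (hstep (g t) h) else (g t) := rfl
    rw [h1, dif_pos (hG t)]
    exact (Classical.choose_spec (hstep (g t) (hG t))).2
  -- pigeonhole on rows
  have hpig : ∃ i j : Fin (m+1), i ≠ j ∧
      ((g i).1 : Fin m × Fin n).1 = ((g j).1 : Fin m × Fin n).1 := by
    have hcard : Fintype.card (Fin m) < Fintype.card (Fin (m+1)) := by simp
    obtain ⟨i, j, hij, heq⟩ := Fintype.exists_ne_map_eq_of_card_lt
      (fun i : Fin (m+1) => ((g i).1 : Fin m × Fin n).1) hcard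
    exact ⟨i, j, hij, heq⟩
  obtain ⟨i, j, hij, heq⟩ := hpig
  -- wlog i < j
  have hmain : ∀ a b : ℕ, a < b →
      ((g a).1 : Fin m × Fin n).1 = ((g b).1 : Fin m × Fin n).1 → ∃ k, AW S d e k := by
    intro a b hab habeq
    refine ⟨b - a, by omega, fun t => ((g (a+t)).1 : Fin m × Fin n).1,
      fun t => ((g (a+t)).1 : Fin m × Fin n).2, ?_, ?_⟩
    · intro t ht
      exact ⟨(g (a+t)).1, (hG (a+t)).1, rfl⟩
    · intro t ht
      refine ⟨(g (a+t)).2, (hG (a+t)).2.1, ?_⟩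
      have hcol : ((g (a+t)).2 : Fin m × Fin n).2 = ((g (a+t)).1 : Fin m × Fin n).2 :=
        (hG (a+t)).2.2
      rcases eq_or_lt_of_le (Nat.lt_succ_iff.mp (by omega : t < (b - a - 1) + 1)) with htl | htl
      · -- t = b - a - 1 : wrap around
        have h1 : (t + 1) % (b - a) = 0 := by
          rw [(by omega : t + 1 = b - a)]; exact Nat.mod_self _
        rw [h1]
        refine Prod.ext ?_ hcol
        show ((g (a+t)).2 : Fin m × Fin n).1 = ((g a).1 : Fin m × Fin n).1
        have h2 : a + t + 1 = b := by omega
        have h5 := hlink (a + t)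
        rw [h2] at h5
        exact h5.symm.trans habeq.symm
      · rw [Nat.mod_eq_of_lt (by omega : t + 1 < b - a)]
        refine Prod.ext ?_ hcol
        show ((g (a+t)).2 : Fin m × Fin n).1 = ((g (a+(t+1))).1 : Fin m × Fin n).1
        rw [(by omega : a + (t+1) = (a + t) + 1)]
        exact (hlink (a+t)).symm
  rcases Nat.lt_or_ge (i : ℕ) (j : ℕ) with hlt | hge
  · exact hmain i j hlt (by simpa using heq)
  · have hlt : (j : ℕ) < (i : ℕ) := by
      rcases Nat.lt_or_ge (j : ℕ) (i : ℕ) with h | h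
      · exact h
      · exact absurd (Fin.ext (by omega)) hij
    exact hmain j i hlt (by simpa using heq.symm)

lemma exists_alt_cycle (d e : {x // x ∈ S} →₀ ℕ) (hν : ν S d = ν S e)
    (hdisj : ∀ x, ¬(x ∈ d.support ∧ x ∈ e.support)) (hd0 : d ≠ 0) :
    ∃ (k : ℕ) (r : ℕ → Fin m) (c : ℕ → Fin n),
      2 ≤ k ∧
      (∀ t1, t1 < k → ∀ t2, t2 < k → r t1 = r t2 → t1 = t2) ∧
      (∀ t1, t1 < k → ∀ t2, t2 < k → c t1 = c t2 → t1 = t2) ∧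
      (∀ t, t < k → PM S d (r t, c t)) ∧
      (∀ t, t < k → PM S e (r ((t+1) % k), c t)) := by
  classical
  have hAW := exists_AW S d e hν hd0
  obtain ⟨k0, hk0spec, hmin⟩ : ∃ k, AW S d e k ∧ ∀ k', k' < k → ¬ AW S d e k' :=
    ⟨Nat.find hAW, Nat.find_spec hAW, fun k' hk' => Nat.find_min hAW hk'⟩
  obtain ⟨hk0pos, r, c, hD, hE⟩ := hk0spec
  -- k0 ≥ 2
  have hk02 : 2 ≤ k0 := by
    by_contra h1
    have hk01 : k0 = 1 := by omega
    obtain ⟨x, hx, hxp⟩ := hD 0 (by omega)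
    obtain ⟨y, hy, hyp⟩ := hE 0 (by omega)
    rw [hk01] at hyp
    norm_num at hyp
    have hxy : x = y := Subtype.ext (by rw [hxp, hyp])
    exact hdisj x ⟨hx, hxy ▸ hy⟩
  -- rows are injective
  have hrinj : ∀ t1, t1 < k0 → ∀ t2, t2 < k0 → r t1 = r t2 → t1 = t2 := by
    intro t1 h1 t2 h2 heq
    by_contra hne
    have hwlog : ∀ a b : ℕ, a < b → b < k0 → r a = r b → False := by
      intro a b hab hbk habeq
      apply hmin (b - a) (by omega)
      refine ⟨by omega, fun t => r (a + t), fun t => c (a + t), ?_, ?_⟩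
      · intro t ht; exact hD (a+t) (by omega)
      · intro t ht
        rcases eq_or_lt_of_le (Nat.lt_succ_iff.mp (by omega : t < (b - a - 1) + 1)) with htl | htl
        · have h3 : (t + 1) % (b - a) = 0 := by
            rw [(by omega : t + 1 = b - a)]; exact Nat.mod_self _
          rw [h3]
          show PM S e (r a, c (a + t))
          rw [habeq]
          have := hE (a + t) (by omega)
          rwa [Nat.mod_eq_of_lt (by omega : a + t + 1 < k0), (by omega : a + t + 1 = b)] at this
        · rw [Nat.mod_eq_of_lt (by omega : t + 1 < b - a)]
          show PM S e (r (a + (t+1)), c (a + t))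
          rw [(by omega : a + (t+1) = a + t + 1)]
          have := hE (a + t) (by omega)
          rwa [Nat.mod_eq_of_lt (by omega : a + t + 1 < k0)] at this
    rcases Nat.lt_or_ge t1 t2 with h | h
    · exact hwlog t1 t2 h h2 heq
    · exact hwlog t2 t1 (by omega) h1 heq.symm
  -- columns are injective
  have hcinj : ∀ t1, t1 < k0 → ∀ t2, t2 < k0 → c t1 = c t2 → t1 = t2 := by
    intro t1 h1 t2 h2 heq
    by_contra hne
    have hwlog : ∀ a b : ℕ, a < b → b < k0 → c a = c b → False := by
      intro a b hab hbk habeq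
      apply hmin (b - a) (by omega)
      refine ⟨by omega, fun t => r (a + 1 + t), fun t => c (a + 1 + t), ?_, ?_⟩
      · intro t ht; exact hD (a+1+t) (by omega)
      · intro t ht
        rcases eq_or_lt_of_le (Nat.lt_succ_iff.mp (by omega : t < (b - a - 1) + 1)) with htl | htl
        · have h3 : (t + 1) % (b - a) = 0 := by
            rw [(by omega : t + 1 = b - a)]; exact Nat.mod_self _
          rw [h3]
          show PM S e (r (a + 1), c (a + 1 + t))
          rw [(by omega : a + 1 + t = b), ← habeq]
          have := hE a (by omega)
          rwa [Nat.mod_eq_of_lt (by omega : a + 1 < k0)] at this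
        · rw [Nat.mod_eq_of_lt (by omega : t + 1 < b - a)]
          show PM S e (r (a + 1 + (t+1)), c (a + 1 + t))
          rw [(by omega : a + 1 + (t+1) = a + 1 + t + 1)]
          have := hE (a + 1 + t) (by omega)
          rwa [Nat.mod_eq_of_lt (by omega : a + 1 + t + 1 < k0)] at this
    rcases Nat.lt_or_ge t1 t2 with h | h
    · exact hwlog t1 t2 h h2 heq
    · exact hwlog t2 t1 (by omega) h1 heq.symm
  exact ⟨k0, r, c, hk02, hrinj, hcinj, hD, hE⟩

end AltCycle

section Moves

/-- total degree of an exponent vector -/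
def deg (d : {x // x ∈ S} →₀ ℕ) : ℕ := d.sum fun _ k => k

lemma deg_add (a b : {x // x ∈ S} →₀ ℕ) : deg S (a + b) = deg S a + deg S b :=
  Finsupp.sum_add_index' (fun _ => rfl) (fun _ _ _ => rfl)

lemma deg_single (x : {x // x ∈ S}) (k : ℕ) : deg S (Finsupp.single x k) = k :=
  Finsupp.sum_single_index rfl

lemma deg_eq_zero (d : {x // x ∈ S} →₀ ℕ) (h : deg S d = 0) : d = 0 := by
  classical
  ext y
  by_contra hy
  have hy' : y ∈ d.support := Finsupp.mem_support_iff.mpr (by simpa using hy)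
  have := Finset.sum_eq_zero_iff.mp h y hy'
  exact (Finsupp.mem_support_iff.mp hy') this

lemma deg_finsum (F : Finset ℕ) (g : ℕ → ({x // x ∈ S} →₀ ℕ)) :
    deg S (∑ t ∈ F, g t) = ∑ t ∈ F, deg S (g t) := by
  classical
  induction F using Finset.induction_on with
  | empty => simp [deg]
  | insert _ _ h ih => rw [Finset.sum_insert h, Finset.sum_insert h, deg_add, ih]

lemma ν_finsum (F : Finset ℕ) (g : ℕ → ({x // x ∈ S} →₀ ℕ)) :
    ν S (∑ t ∈ F, g t) = ∑ t ∈ F, ν S (g t) := by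
  classical
  induction F using Finset.induction_on with
  | empty => simp [ν_zero]
  | insert _ _ h ih => rw [Finset.sum_insert h, Finset.sum_insert h, ν_add, ih]

lemma monomial_range_prod (k : ℕ) (f : ℕ → {x // x ∈ S}) :
    (MvPolynomial.monomial (∑ t ∈ Finset.range k, Finsupp.single (f t) 1) (1:ℂ)) =
      ∏ t ∈ Finset.range k, MvPolynomial.X (f t) := by
  induction k with
  | zero => simp
  | succ k ih =>
      rw [Finset.sum_range_succ, Finset.prod_range_succ, ← ih, MvPolynomial.X,
        MvPolynomial.monomial_mul, one_mul]

lemma erase_one (d : {x // x ∈ S} →₀ ℕ) (x : {x // x ∈ S}) (hx : x ∈ d.support) :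
    Finsupp.single x 1 + (d - Finsupp.single x 1) = d := by
  have hle : Finsupp.single x 1 ≤ d := by
    rw [Finsupp.single_le_iff]
    exact Nat.one_le_iff_ne_zero.mpr (Finsupp.mem_support_iff.mp hx)
  rw [add_comm]
  exact tsub_add_cancel_of_le hle

lemma sum_rot {M : Type*} [AddCommMonoid M] (k : ℕ) (hk : 1 ≤ k) (f : ℕ → M) :
    ∑ t ∈ Finset.range k, f ((t+1) % k) = ∑ t ∈ Finset.range k, f t := by
  have hkpos : 0 < k := hk
  refine Finset.sum_nbij' (fun t => (t+1) % k) (fun t => (t + (k-1)) % k) ?_ ?_ ?_ ?_ ?_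
  · intro t ht; exact Finset.mem_range.mpr (Nat.mod_lt _ hkpos)
  · intro t ht; exact Finset.mem_range.mpr (Nat.mod_lt _ hkpos)
  · intro t ht
    rw [Finset.mem_range] at ht
    show ((t+1) % k + (k-1)) % k = t
    rw [Nat.mod_add_mod, (by omega : t + 1 + (k-1) = t + k), Nat.add_mod_right,
      Nat.mod_eq_of_lt ht]
  · intro t ht
    rw [Finset.mem_range] at ht
    show ((t + (k-1)) % k + 1) % k = t
    rw [Nat.mod_add_mod, (by omega : t + (k-1) + 1 = t + k), Nat.add_mod_right,
      Nat.mod_eq_of_lt ht]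
  · intro t ht; rfl

lemma sum_single_le (k : ℕ) (f : ℕ → {x // x ∈ S}) (d : {x // x ∈ S} →₀ ℕ)
    (hmem : ∀ t, t < k → f t ∈ d.support)
    (hinj : ∀ t1, t1 < k → ∀ t2, t2 < k → f t1 = f t2 → t1 = t2) :
    (∑ t ∈ Finset.range k, Finsupp.single (f t) 1) ≤ d := by
  classical
  rw [Finsupp.le_iff]
  intro y hy
  rw [Finsupp.finset_sum_apply]
  by_cases hex : ∃ t0, t0 < k ∧ f t0 = y
  · obtain ⟨t0, ht0, hft0⟩ := hex
    have hsum : (∑ t ∈ Finset.range k, (Finsupp.single (f t) 1) y) = 1 := by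
      rw [Finset.sum_eq_single_of_mem t0 (Finset.mem_range.mpr ht0)]
      · rw [hft0, Finsupp.single_apply, if_pos rfl]
      · intro t ht hne
        rw [Finset.mem_range] at ht
        rw [Finsupp.single_apply, if_neg]
        intro hctr
        exact hne (hinj t ht t0 ht0 (by rw [hctr, hft0]))
    rw [hsum]
    have : y ∈ d.support := hft0 ▸ hmem t0 ht0
    exact Nat.one_le_iff_ne_zero.mpr (Finsupp.mem_support_iff.mp this)
  · push_neg at hex
    have hsum : (∑ t ∈ Finset.range k, (Finsupp.single (f t) 1) y) = 0 := by
      refine Finset.sum_eq_zero fun t ht => ?_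
      rw [Finset.mem_range] at ht
      rw [Finsupp.single_apply, if_neg (hex t ht)]
    rw [hsum]
    exact Nat.zero_le _

lemma sum_single_apply_one (k : ℕ) (f : ℕ → {x // x ∈ S}) (t0 : ℕ) (ht0 : t0 < k)
    (hinj : ∀ t1, t1 < k → ∀ t2, t2 < k → f t1 = f t2 → t1 = t2) :
    (∑ t ∈ Finset.range k, Finsupp.single (f t) 1) (f t0) = 1 := by
  classical
  rw [Finsupp.finset_sum_apply]
  rw [Finset.sum_eq_single_of_mem t0 (Finset.mem_range.mpr ht0)]
  · rw [Finsupp.single_apply, if_pos rfl]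
  · intro t ht hne
    rw [Finset.mem_range] at ht
    rw [Finsupp.single_apply, if_neg]
    intro hctr
    exact hne (hinj t ht t0 ht0 hctr)

lemma moves (hS : ChordalBipartite (qiGraph m n S)) :
    ∀ N, ∀ d e : {x // x ∈ S} →₀ ℕ, deg S d ≤ N → ν S d = ν S e →
      MvPolynomial.monomial d 1 - MvPolynomial.monomial e 1 ∈ Ideal.span (Q S) := by
  classical
  intro N
  induction N with
  | zero =>
      intro d e hdeg hν
      have hd : d = 0 := deg_eq_zero S d (by omega)
      have he : e = 0 := ν_eq_zero S e (by rw [← hν, hd, ν_zero])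
      rw [hd, he, sub_self]
      exact Ideal.zero_mem _
  | succ N ih =>
      intro d e hdeg hν
      by_cases hde : d = e
      · rw [hde, sub_self]; exact Ideal.zero_mem _
      by_cases hcom : ∃ x, x ∈ d.support ∧ x ∈ e.support
      · -- factor out a common variable
        obtain ⟨x, hxd, hxe⟩ := hcom
        set A := d - Finsupp.single x 1 with hA
        set B := e - Finsupp.single x 1 with hB
        have hdA : Finsupp.single x 1 + A = d := erase_one S d x hxd
        have heB : Finsupp.single x 1 + B = e := erase_one S e x hxe
        have hνAB : ν S A = ν S B := by
          have h1 : ν S (Finsupp.single x 1) + ν S A = ν S (Finsupp.single x 1) + ν S B := by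
            rw [← ν_add, ← ν_add, hdA, heB, hν]
          exact add_left_cancel h1
        have hdegA : deg S A ≤ N := by
          have h1 : deg S (Finsupp.single x 1) + deg S A = deg S d := by
            rw [← deg_add, hdA]
          rw [deg_single] at h1
          omega
        have hbin := ih A B hdegA hνAB
        have hfact : MvPolynomial.monomial d (1:ℂ) - MvPolynomial.monomial e 1 =
            MvPolynomial.X x * (MvPolynomial.monomial A 1 - MvPolynomial.monomial B 1) := by
          rw [mul_sub, MvPolynomial.X, MvPolynomial.monomial_mul, MvPolynomial.monomial_mul,
            one_mul, hdA, heB]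
        rw [hfact]
        exact Ideal.mul_mem_left _ _ hbin
      · -- disjoint supports: use an alternating cycle
        push_neg at hcom
        have hd0 : d ≠ 0 := by
          intro h0
          apply hde
          rw [h0]
          exact (ν_eq_zero S e (by rw [← hν, h0, ν_zero])).symm
        obtain ⟨k, r, c, hk2, hrinj, hcinj, hD, hE⟩ :=
          exists_alt_cycle S d e hν (fun x hx => hcom x hx.1 hx.2) hd0
        -- choose witnesses
        obtain ⟨x0, hx0⟩ := Finsupp.support_nonempty_iff.mpr hd0
        have hDch : ∀ t, ∃ x : {x // x ∈ S}, t < k →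
            (x ∈ d.support ∧ (x : Fin m × Fin n) = (r t, c t)) := by
          intro t
          by_cases ht : t < k
          · obtain ⟨x, hx1, hx2⟩ := hD t ht
            exact ⟨x, fun _ => ⟨hx1, hx2⟩⟩
          · exact ⟨x0, fun h => absurd h ht⟩
        have hEch : ∀ t, ∃ x : {x // x ∈ S}, t < k →
            (x ∈ e.support ∧ (x : Fin m × Fin n) = (r ((t+1) % k), c t)) := by
          intro t
          by_cases ht : t < k
          · obtain ⟨x, hx1, hx2⟩ := hE t ht
            exact ⟨x, fun _ => ⟨hx1, hx2⟩⟩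
          · exact ⟨x0, fun h => absurd h ht⟩
        choose xD hxD using hDch
        choose xE hxE using hEch
        set Cd : {x // x ∈ S} →₀ ℕ := ∑ t ∈ Finset.range k, Finsupp.single (xD t) 1 with hCd
        set Ce : {x // x ∈ S} →₀ ℕ := ∑ t ∈ Finset.range k, Finsupp.single (xE t) 1 with hCe
        have hxDinj : ∀ t1, t1 < k → ∀ t2, t2 < k → xD t1 = xD t2 → t1 = t2 := by
          intro t1 h1 t2 h2 heq
          have e1 := (hxD t1 h1).2
          have e2 := (hxD t2 h2).2
          rw [heq] at e1
          rw [e1] at e2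
          exact hcinj t1 h1 t2 h2 (by simpa using congrArg Prod.snd e2)
        have hxEinj : ∀ t1, t1 < k → ∀ t2, t2 < k → xE t1 = xE t2 → t1 = t2 := by
          intro t1 h1 t2 h2 heq
          have e1 := (hxE t1 h1).2
          have e2 := (hxE t2 h2).2
          rw [heq] at e1
          rw [e1] at e2
          exact hcinj t1 h1 t2 h2 (by simpa using congrArg Prod.snd e2)
        have hCdle : Cd ≤ d :=
          sum_single_le S k xD d (fun t ht => (hxD t ht).1) hxDinj
        have hCele : Ce ≤ e :=
          sum_single_le S k xE e (fun t ht => (hxE t ht).1) hxEinj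
        -- marginals of the two halves of the cycle agree
        have hνC : ν S Cd = ν S Ce := by
          rw [hCd, hCe, ν_finsum, ν_finsum]
          have h1 : ∀ t ∈ Finset.range k, ν S (Finsupp.single (xD t) 1) =
              Finsupp.single (Sum.inl (r t)) 1 + Finsupp.single (Sum.inr (c t)) 1 := by
            intro t ht
            rw [Finset.mem_range] at ht
            rw [ν_single, one_smul, (hxD t ht).2]
          have h2 : ∀ t ∈ Finset.range k, ν S (Finsupp.single (xE t) 1) =
              Finsupp.single (Sum.inl (r ((t+1) % k))) 1 + Finsupp.single (Sum.inr (c t)) 1 := by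
            intro t ht
            rw [Finset.mem_range] at ht
            rw [ν_single, one_smul, (hxE t ht).2]
          rw [Finset.sum_congr rfl h1, Finset.sum_congr rfl h2,
            Finset.sum_add_distrib, Finset.sum_add_distrib,
            sum_rot k (by omega) (fun t => Finsupp.single (Sum.inl (r t)) (1:ℕ))]
        -- the cycle binomial is in the span
        have hdmem : ∀ t, t < k → (r t, c t) ∈ S := by
          intro t ht
          have := (hxD t ht).2
          rw [← this]
          exact (xD t).2
        have hemem : ∀ t, t < k → (r ((t+1) % k), c t) ∈ S := by
          intro t ht
          have := (hxE t ht).2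
          rw [← this]
          exact (xE t).2
        have hcyc := cycle_binomial S hS k r c (by omega) hrinj hcinj hdmem hemem
        have hprodD : (MvPolynomial.monomial Cd (1:ℂ)) =
            ∏ t ∈ Finset.range k, XS S (r t, c t) := by
          rw [hCd, monomial_range_prod]
          refine Finset.prod_congr rfl fun t ht => ?_
          rw [Finset.mem_range] at ht
          rw [XS_mem S _ (hdmem t ht)]
          congr 1
          exact Subtype.ext (hxD t ht).2
        have hprodE : (MvPolynomial.monomial Ce (1:ℂ)) =
            ∏ t ∈ Finset.range k, XS S (r ((t+1) % k), c t) := by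
          rw [hCe, monomial_range_prod]
          refine Finset.prod_congr rfl fun t ht => ?_
          rw [Finset.mem_range] at ht
          rw [XS_mem S _ (hemem t ht)]
          congr 1
          exact Subtype.ext (hxE t ht).2
        have hcycbin : (MvPolynomial.monomial Cd (1:ℂ)) - MvPolynomial.monomial Ce 1 ∈
            Ideal.span (Q S) := by
          rw [hprodD, hprodE]
          exact hcyc
        -- decompose
        set d' := d - Cd with hd'
        have hdd' : d' + Cd = d := tsub_add_cancel_of_le hCdle
        have hsplit : MvPolynomial.monomial d (1:ℂ) - MvPolynomial.monomial e 1 =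
            MvPolynomial.monomial d' 1 *
              (MvPolynomial.monomial Cd 1 - MvPolynomial.monomial Ce 1) +
            (MvPolynomial.monomial (d' + Ce) 1 - MvPolynomial.monomial e 1) := by
          rw [mul_sub, MvPolynomial.monomial_mul, MvPolynomial.monomial_mul, one_mul, hdd']
          ring
        rw [hsplit]
        refine Ideal.add_mem _ (Ideal.mul_mem_left _ _ hcycbin) ?_
        -- the remaining binomial
        have hνd'Ce : ν S (d' + Ce) = ν S e := by
          rw [ν_add]
          calc ν S d' + ν S Ce = ν S d' + ν S Cd := by rw [hνC]
            _ = ν S (d' + Cd) := (ν_add S d' Cd).symm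
            _ = ν S d := by rw [hdd']
            _ = ν S e := hν
        by_cases heq2 : d' + Ce = e
        · rw [heq2, sub_self]
          exact Ideal.zero_mem _
        · set x' := xE 0 with hx'
          have hx'Ce : Ce (x') = 1 := by
            rw [hCe]
            exact sum_single_apply_one S k xE 0 (by omega) hxEinj
          have hx'mem1 : x' ∈ (d' + Ce).support := by
            rw [Finsupp.mem_support_iff, Finsupp.add_apply]
            omega
          have hx'mem2 : x' ∈ e.support := (hxE 0 (by omega)).1
          set A := (d' + Ce) - Finsupp.single x' 1 with hA
          set B := e - Finsupp.single x' 1 with hB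
          have hdA : Finsupp.single x' 1 + A = d' + Ce := erase_one S _ x' hx'mem1
          have heB : Finsupp.single x' 1 + B = e := erase_one S e x' hx'mem2
          have hνAB : ν S A = ν S B := by
            have h1 : ν S (Finsupp.single x' 1) + ν S A =
                ν S (Finsupp.single x' 1) + ν S B := by
              rw [← ν_add, ← ν_add, hdA, heB, hνd'Ce]
            exact add_left_cancel h1
          have hdegA : deg S A ≤ N := by
            have h1 : deg S (Finsupp.single x' 1) + deg S A = deg S (d' + Ce) := by
              rw [← deg_add, hdA]
            have h2 : deg S (d' + Cd) = deg S d := by rw [hdd']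
            have h3 : deg S Cd = k := by
              rw [hCd, deg_finsum]
              rw [Finset.sum_congr rfl (fun t _ => deg_single S (xD t) 1)]
              simp
            have h4 : deg S Ce = k := by
              rw [hCe, deg_finsum]
              rw [Finset.sum_congr rfl (fun t _ => deg_single S (xE t) 1)]
              simp
            rw [deg_single] at h1
            rw [deg_add] at h2
            rw [deg_add, h4] at h1
            omega
          have hbin := ih A B hdegA hνAB
          have hfact : MvPolynomial.monomial (d' + Ce) (1:ℂ) - MvPolynomial.monomial e 1 =
              MvPolynomial.X x' * (MvPolynomial.monomial A 1 - MvPolynomial.monomial B 1) := by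
            rw [mul_sub, MvPolynomial.X, MvPolynomial.monomial_mul, MvPolynomial.monomial_mul,
              one_mul, hdA, heB]
          rw [hfact]
          exact Ideal.mul_mem_left _ _ hbin

end Moves
end QIProof
/-- if `G_S` is chordal bipartite, the toric vanishing ideal of the
quasi-independence model `M_S` (the kernel of `p_{ij} ↦ x_i y_j`) is generated by the
binomials `p_{ij} p_{kℓ} − p_{iℓ} p_{kj}` of the fully observed 2×2 minors. -/
theorem vanishing_ideal_generated_by_quadrics (m n : ℕ) (S : Finset (Fin m × Fin n))
    (hS : ChordalBipartite (qiGraph m n S)) :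
    RingHom.ker (MvPolynomial.aeval (R := ℂ)
        (fun x : {x // x ∈ S} =>
          MvPolynomial.X (Sum.inl x.1.1) * MvPolynomial.X (Sum.inr x.1.2)) :
        MvPolynomial {x // x ∈ S} ℂ →ₐ[ℂ] MvPolynomial (Fin m ⊕ Fin n) ℂ) =
      Ideal.span {f : MvPolynomial {x // x ∈ S} ℂ |
        ∃ (i k : Fin m) (j l : Fin n) (h1 : (i, j) ∈ S) (h2 : (k, l) ∈ S)
          (h3 : (i, l) ∈ S) (h4 : (k, j) ∈ S),
          f = MvPolynomial.X ⟨(i, j), h1⟩ * MvPolynomial.X ⟨(k, l), h2⟩ -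
              MvPolynomial.X ⟨(i, l), h3⟩ * MvPolynomial.X ⟨(k, j), h4⟩} := by
  exact le_antisymm
    (QIProof.ker_le_span S (fun d e hν => QIProof.moves S hS (QIProof.deg S d) d e le_rfl hν))
    (QIProof.span_le_ker S)
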